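/- Let h : ℝ^n → (-∞, ∞] be proper, closed, and convex with nonempty domain X, let X^d ⊆ X be finite and nonempty, and let y ∈ ℝ^n with x ∈ ∂h*(y) (the subdifferential of the conjugate at y). Then h*(y) - h^{*d}(y) ≤ [‖y‖ + Lip(h; {x} ∪ X^d)] · dist(x, X^d), where Lip(h; S) denotes the Lipschitz constant of h restricted to S and dist(x, X^d) = min_{z ∈ X^d} ‖x - z‖. -/

import Mathlib

open Metric

/-- Key lemma: Fenchel–Young type bound: if `x ∈ ∂h*(y)` then `h*(y) ≤ ⟪y,x⟫ - h x`. -/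
theorem key_conj_le {n : ℕ}
    (h : EuclideanSpace ℝ (Fin n) → ℝ)
    (X : Set (EuclideanSpace ℝ (Fin n)))
    (hconv : ConvexOn ℝ X h) (hlsc : LowerSemicontinuousOn h X)
    (y x : EuclideanSpace ℝ (Fin n)) (hx : x ∈ X)
    (hsubgrad : ∀ z : EuclideanSpace ℝ (Fin n),
        sSup ((fun w => (inner ℝ z w : ℝ) - h w) '' X)
          ≥ sSup ((fun w => (inner ℝ y w : ℝ) - h w) '' X) + (inner ℝ x (z - y) : ℝ)) :
    sSup ((fun w => (inner ℝ y w : ℝ) - h w) '' X) ≤ (inner ℝ y x : ℝ) - h x := by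
  refine le_of_forall_pos_le_add fun ε hε => ?_
  set S : Set (EuclideanSpace ℝ (Fin n) × ℝ) := {p | p.1 ∈ X ∧ h p.1 ≤ p.2} with hS
  have hScl : Convex ℝ (closure S) := (hconv.convex_epigraph).closure
  -- the point (x, h x - ε) is not in the closure of S
  have hpt : (x, h x - ε) ∉ closure S := by
    intro hmem
    have hlx := hlsc x hx (h x - ε / 2) (by linarith)
    rw [eventually_nhdsWithin_iff] at hlx
    obtain ⟨U, hUsub, hUopen, hUx⟩ := _root_.eventually_nhds_iff.mp hlx
    have hopen : IsOpen (U ×ˢ Set.Iio (h x - ε / 2)) := hUopen.prod isOpen_Iio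
    have hxin : (x, h x - ε) ∈ U ×ˢ Set.Iio (h x - ε / 2) :=
      ⟨hUx, by simp only [Set.mem_Iio]; linarith⟩
    obtain ⟨⟨w, t⟩, ⟨hwU, ht⟩, hwX, hwh⟩ := mem_closure_iff.mp hmem _ hopen hxin
    have := hUsub w hwU hwX
    simp only [Set.mem_Iio] at ht
    simp only at hwh
    linarith
  obtain ⟨F, u, hFu, hFS⟩ := geometric_hahn_banach_point_closed hScl isClosed_closure hpt
  set s : ℝ := F (0, 1) with hs
  have hFdec : ∀ (w : EuclideanSpace ℝ (Fin n)) (t : ℝ), F (w, t) = F (w, 0) + t * s := by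
    intro w t
    have : (w, t) = (w, (0:ℝ)) + t • ((0:EuclideanSpace ℝ (Fin n)), (1:ℝ)) := by
      simp [Prod.ext_iff]
    rw [this, map_add, map_smul, smul_eq_mul]
  have hFS' : ∀ w ∈ X, u < F (w, 0) + h w * s := by
    intro w hw
    have := hFS (w, h w) (subset_closure ⟨hw, le_rfl⟩)
    rwa [hFdec] at this
  have hFx : F (x, 0) + (h x - ε) * s < u := by
    have := hFu
    rwa [hFdec] at this
  have hspos : 0 < s := by
    by_contra hle
    push_neg at hle
    have h1 := hFS' x hx
    nlinarith
  set a : EuclideanSpace ℝ (Fin n) →L[ℝ] ℝ :=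
    F.comp (ContinuousLinearMap.inl ℝ (EuclideanSpace ℝ (Fin n)) ℝ) with ha
  have haw : ∀ w : EuclideanSpace ℝ (Fin n), a w = F (w, 0) := fun w => rfl
  set z : EuclideanSpace ℝ (Fin n) :=
    (-(1/s)) • (InnerProductSpace.toDual ℝ (EuclideanSpace ℝ (Fin n))).symm a with hz
  have hzw : ∀ w : EuclideanSpace ℝ (Fin n), (inner ℝ z w : ℝ) = -(1/s) * F (w, 0) := by
    intro w
    rw [hz, real_inner_smul_left, InnerProductSpace.toDual_symm_apply, haw]
  have hbdd : ∀ w ∈ X, (inner ℝ z w : ℝ) - h w ≤ (inner ℝ z x : ℝ) - h x + ε := by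
    intro w hw
    have h1 := hFS' w hw
    have h2 : F (x, 0) + (h x - ε) * s < F (w, 0) + h w * s := lt_trans hFx h1
    rw [hzw, hzw]
    have hinvpos : 0 < 1/s := one_div_pos.mpr hspos
    have h4 : (1/s) * ((h x - ε - h w) * s) < (1/s) * (F (w, 0) - F (x, 0)) :=
      mul_lt_mul_of_pos_left (by linarith) hinvpos
    have h5 : (1/s) * ((h x - ε - h w) * s) = h x - ε - h w := by
      field_simp
    rw [h5] at h4
    linarith [h4]
  have hne : ((fun w => (inner ℝ z w : ℝ) - h w) '' X).Nonempty :=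
    ⟨_, Set.mem_image_of_mem _ hx⟩
  have hsup_le : sSup ((fun w => (inner ℝ z w : ℝ) - h w) '' X)
      ≤ (inner ℝ z x : ℝ) - h x + ε := by
    apply csSup_le hne
    rintro _ ⟨w, hw, rfl⟩
    exact hbdd w hw
  have hsub := hsubgrad z
  have hinner : (inner ℝ x (z - y) : ℝ) = (inner ℝ x z : ℝ) - (inner ℝ x y : ℝ) :=
    inner_sub_right x z y
  have hcomm1 : (inner ℝ z x : ℝ) = (inner ℝ x z : ℝ) := real_inner_comm x z
  have hcomm2 : (inner ℝ y x : ℝ) = (inner ℝ x y : ℝ) := real_inner_comm x y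
  linarith [hsub, hsup_le]

/-- Pointwise error bound for discrete conjugation: for `h` proper, closed,
convex with domain `X`, a finite sample `Xd ⊆ X`, and `x ∈ ∂h*(y)`,
`h*(y) - h^{*d}(y) ≤ (‖y‖ + Lip(h; {x} ∪ Xd)) · dist(x, Xd)`. -/
theorem conj_sub_discrete_conj_le {n : ℕ}
    (h : EuclideanSpace ℝ (Fin n) → ℝ)
    (X : Set (EuclideanSpace ℝ (Fin n))) (hXne : X.Nonempty)
    (hconv : ConvexOn ℝ X h) (hlsc : LowerSemicontinuousOn h X)
    (Xd : Set (EuclideanSpace ℝ (Fin n)))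
    (hXdsub : Xd ⊆ X) (hXdfin : Xd.Finite) (hXdne : Xd.Nonempty)
    (y x : EuclideanSpace ℝ (Fin n)) (hx : x ∈ X)
    -- `x` is a subgradient point of the conjugate `h*` at `y`, i.e. `x ∈ ∂h*(y)`:
    (hsubgrad : ∀ z : EuclideanSpace ℝ (Fin n),
        sSup ((fun w => (inner ℝ z w : ℝ) - h w) '' X)
          ≥ sSup ((fun w => (inner ℝ y w : ℝ) - h w) '' X) + (inner ℝ x (z - y) : ℝ))
    -- `K` is the Lipschitz constant of `h` on `{x} ∪ Xd`:
    (K : ℝ) (hK : 0 ≤ K)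
    (hlip : ∀ a ∈ insert x Xd, ∀ b ∈ insert x Xd, |h a - h b| ≤ K * ‖a - b‖) :
    sSup ((fun w => (inner ℝ y w : ℝ) - h w) '' X)
        - sSup ((fun w => (inner ℝ y w : ℝ) - h w) '' Xd)
      ≤ (‖y‖ + K) * Metric.infDist x Xd := by
  have hkey := key_conj_le h X hconv hlsc y x hx hsubgrad
  obtain ⟨z₀, hz₀, hz₀d⟩ := (hXdfin.isCompact).exists_infDist_eq_dist hXdne x
  have hdist : Metric.infDist x Xd = ‖x - z₀‖ := by rw [hz₀d, dist_eq_norm]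
  have hfd : (inner ℝ y z₀ : ℝ) - h z₀
      ≤ sSup ((fun w => (inner ℝ y w : ℝ) - h w) '' Xd) := by
    apply le_csSup ((hXdfin.image _).bddAbove)
    exact Set.mem_image_of_mem _ hz₀
  have hinner : (inner ℝ y x : ℝ) - (inner ℝ y z₀ : ℝ) ≤ ‖y‖ * ‖x - z₀‖ := by
    have h1 := real_inner_le_norm y (x - z₀)
    rw [inner_sub_right] at h1
    linarith
  have hlb : h z₀ - h x ≤ K * ‖x - z₀‖ := by
    have h1 := hlip z₀ (Set.mem_insert_of_mem _ hz₀) x (Set.mem_insert _ _)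
    have h2 : h z₀ - h x ≤ |h z₀ - h x| := le_abs_self _
    have h3 : ‖z₀ - x‖ = ‖x - z₀‖ := norm_sub_rev _ _
    rw [h3] at h1
    linarith
  rw [hdist]
  nlinarith [hfd, hinner, hlb, hkey]
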